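/- Regard 𝓔 as a function of (d_ij, d_jk, θ). If at a point the equilibrium condition H² = I_H²/d_ki³ holds, then at that point the partial derivative of 𝓔 with respect to d_ij equals m_i m_j (1/d_ij³ − 1/d_ki³) d_ij; in particular, this partial derivative is nonnegative (the contact constraint on d_ij remains enforced) if and only if d_ij ≤ d_ki. -/

import Mathlib

/-- Third side from the law of cosines. -/
noncomputable def dki (dij djk θ : ℝ) : ℝ :=
  Real.sqrt (dij ^ 2 + djk ^ 2 - 2 * dij * djk * Real.cos θ)

/-- Moment of inertia about the rotation axis. -/
noncomputable def IH (mi mj mk IS dij djk θ : ℝ) : ℝ :=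
  mi * mj * dij ^ 2 + mj * mk * djk ^ 2 + mk * mi * (dki dij djk θ) ^ 2 + IS

/-- The amended potential `𝓔 = H²/(2 I_H) + U` as a function of
`(d_ij, d_jk, θ)`. -/
noncomputable def amended (mi mj mk IS H dij djk θ : ℝ) : ℝ :=
  H ^ 2 / (2 * IH mi mj mk IS dij djk θ)
    - (mi * mj / dij + mj * mk / djk + mk * mi / dki dij djk θ)

/-- At a point where the equilibrium condition `H² = I_H²/d_ki³` holds, the
partial derivative of `𝓔` with respect to `d_ij` equals
`m_i m_j (1/d_ij³ − 1/d_ki³) d_ij`, and it is nonnegative (the contact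
constraint on `d_ij` remains enforced) iff `d_ij ≤ d_ki`. -/
theorem contact_constraint_at_equilibrium
    (mi mj mk IS H dij djk θ : ℝ)
    (hmi : 0 < mi) (hmj : 0 < mj) (hmk : 0 < mk) (hIS : 0 < IS) (hH : 0 ≤ H)
    (hdij : 0 < dij) (hdjk : 0 < djk) (hθ : θ ∈ Set.Ioo 0 Real.pi)
    (hequil : H ^ 2 = (IH mi mj mk IS dij djk θ) ^ 2 / (dki dij djk θ) ^ 3) :
    deriv (fun x => amended mi mj mk IS H x djk θ) dij =
        mi * mj * (1 / dij ^ 3 - 1 / (dki dij djk θ) ^ 3) * dij ∧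
      (0 ≤ deriv (fun x => amended mi mj mk IS H x djk θ) dij ↔
        dij ≤ dki dij djk θ) := by
  obtain ⟨hθ0, hθπ⟩ := hθ
  have hsin : 0 < Real.sin θ := Real.sin_pos_of_pos_of_lt_pi hθ0 hθπ
  set c := Real.cos θ with hc
  have hpyth : Real.sin θ ^ 2 + c ^ 2 = 1 := Real.sin_sq_add_cos_sq θ
  have hQpos : 0 < dij ^ 2 + djk ^ 2 - 2 * dij * djk * c := by
    nlinarith [sq_nonneg (dij - djk * c), mul_pos (mul_pos hdjk hsin) (mul_pos hdjk hsin)]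
  have hdval : dki dij djk θ = Real.sqrt (dij ^ 2 + djk ^ 2 - 2 * dij * djk * c) := rfl
  set d := dki dij djk θ with hd
  have hdpos : 0 < d := by rw [hdval]; exact Real.sqrt_pos.mpr hQpos
  have hdsq : d ^ 2 = dij ^ 2 + djk ^ 2 - 2 * dij * djk * c := by
    rw [hdval]; exact Real.sq_sqrt hQpos.le
  -- derivative of Q
  have hQ : HasDerivAt (fun x : ℝ => x ^ 2 + djk ^ 2 - 2 * x * djk * c)
      (2 * dij - 2 * djk * c) dij := by
    have h1 : HasDerivAt (fun x : ℝ => x ^ 2 + djk ^ 2 - 2 * djk * c * x)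
        ((↑(2:ℕ)) * dij ^ (2 - 1) - 2 * djk * c * 1) dij :=
      ((hasDerivAt_pow 2 dij).add_const (djk ^ 2)).sub
      ((hasDerivAt_id dij).const_mul (2 * djk * c))
    convert h1 using 1
    · funext x; simp; ring
    · simp
  -- derivative of sqrt Q
  have hdk : HasDerivAt (fun x : ℝ => Real.sqrt (x ^ 2 + djk ^ 2 - 2 * x * djk * c))
      ((2 * dij - 2 * djk * c) / (2 * d)) dij := by
    have := hQ.sqrt hQpos.ne'
    rwa [← hdval] at this
  -- derivative of IH
  have hIH : HasDerivAt (fun x : ℝ => IH mi mj mk IS x djk θ)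
      (2 * mi * mj * dij + mk * mi * (2 * dij - 2 * djk * c)) dij := by
    have h1 : HasDerivAt (fun x : ℝ =>
        mi * mj * x ^ 2 + mj * mk * djk ^ 2
          + mk * mi * (Real.sqrt (x ^ 2 + djk ^ 2 - 2 * x * djk * c)) ^ 2 + IS)
        (mi * mj * (2 * dij) + mk * mi * (2 * d ^ 1 * ((2 * dij - 2 * djk * c) / (2 * d)))) dij := by
      have h2 := ((hasDerivAt_pow 2 dij).const_mul (mi * mj)).add_const (mj * mk * djk ^ 2)
      have h3 := (hdk.pow 2).const_mul (mk * mi)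
      have h4 := (h2.add h3).add_const IS
      exact h4.congr_deriv (by rw [← hdval]; push_cast; ring)
    have h5 : (fun x : ℝ =>
        mi * mj * x ^ 2 + mj * mk * djk ^ 2
          + mk * mi * (Real.sqrt (x ^ 2 + djk ^ 2 - 2 * x * djk * c)) ^ 2 + IS)
        = fun x => IH mi mj mk IS x djk θ := by
      funext x; simp [IH, dki, hc]
    rw [h5] at h1
    convert h1 using 1
    field_simp
  set IHv := IH mi mj mk IS dij djk θ with hIHv
  have hIHpos : 0 < IHv := by
    rw [hIHv, IH, ← hd]
    positivity
  set IH' := 2 * mi * mj * dij + mk * mi * (2 * dij - 2 * djk * c) with hIH'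
  -- derivative of amended
  have hA : HasDerivAt (fun x => amended mi mj mk IS H x djk θ)
      (-(H ^ 2 * (2 * IH')) / (2 * IHv) ^ 2
        - (-(mi * mj) / dij ^ 2 + (-(mk * mi) * ((2 * dij - 2 * djk * c) / (2 * d))) / d ^ 2)) dij := by
    have h1 : HasDerivAt (fun x : ℝ => H ^ 2 / (2 * IH mi mj mk IS x djk θ))
        ((0 * (2 * IHv) - H ^ 2 * (2 * IH')) / (2 * IHv) ^ 2) dij := by
      exact (hasDerivAt_const dij (H ^ 2)).div (hIH.const_mul 2) (by positivity)
    have h2 : HasDerivAt (fun x : ℝ => mi * mj / x)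
        ((0 * dij - mi * mj * 1) / dij ^ 2) dij :=
      (hasDerivAt_const dij (mi * mj)).div (hasDerivAt_id dij) hdij.ne'
    have h3 : HasDerivAt (fun x : ℝ => mk * mi / dki x djk θ)
        ((0 * d - mk * mi * ((2 * dij - 2 * djk * c) / (2 * d))) / d ^ 2) dij := by
      have := (hasDerivAt_const dij (mk * mi)).div hdk (by rw [← hdval]; exact hdpos.ne')
      exact this.congr_deriv (by rw [← hdval])
    have h4 := h1.sub ((h2.add (hasDerivAt_const dij (mj * mk / djk))).add h3)
    have h5 : (fun x : ℝ => H ^ 2 / (2 * IH mi mj mk IS x djk θ)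
        - (mi * mj / x + mj * mk / djk + mk * mi / dki x djk θ))
        = fun x => amended mi mj mk IS H x djk θ := by
      funext x; simp [amended]
    exact h4.congr_deriv (by ring)
  have key : deriv (fun x => amended mi mj mk IS H x djk θ) dij
      = mi * mj * (1 / dij ^ 3 - 1 / d ^ 3) * dij := by
    rw [hA.deriv, hequil, hIH']
    field_simp
    ring
  refine ⟨key, ?_⟩
  rw [key]
  have h1 : (0:ℝ) < dij ^ 3 := by positivity
  have h2 : (0:ℝ) < d ^ 3 := by positivity
  constructor
  · intro h
    have hm : 0 < mi * mj * dij := by positivity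
    have h4 : 0 ≤ 1 / dij ^ 3 - 1 / d ^ 3 := by nlinarith
    have h5 : dij ^ 3 ≤ d ^ 3 := by
      have h6 := (div_le_div_iff₀ h2 h1).mp (show 1 / d ^ 3 ≤ 1 / dij ^ 3 by linarith)
      linarith
    exact le_of_pow_le_pow_left₀ (by norm_num) hdpos.le h5
  · intro h
    have h5 : dij ^ 3 ≤ d ^ 3 := pow_le_pow_left₀ hdij.le h 3
    have h6 : 1 / d ^ 3 ≤ 1 / dij ^ 3 := one_div_le_one_div_of_le h1 h5
    have : 0 ≤ 1 / dij ^ 3 - 1 / d ^ 3 := by linarith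
    have := mul_nonneg (mul_nonneg (mul_nonneg hmi.le hmj.le) this) hdij.le
    linarith
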